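/- Given an invertible Hermitian H ∈ ℍ^{n×n} and vectors e₁,…,e_m in ℍⁿ spanning a subspace V₁ with prescribed Gramian [eᵢ,eⱼ] that is zero for the first m₀ indices, there exist vectors ẽ₁,…,ẽ_{m₀} ∈ ℍⁿ with [ẽⱼ, eᵢ] = δᵢⱼ for all i = 1,…,m and [ẽₖ, ẽₖ] = 0 for k = 1,…,m₀. -/

import Mathlib

open Quaternion Matrix

/-- The indefinite inner product `[x,y] = y* H x` on `ℍⁿ`. -/
noncomputable def qform {n : ℕ} (H : Matrix (Fin n) (Fin n) ℍ[ℝ]) (x y : Fin n → ℍ[ℝ]) : ℍ[ℝ] :=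
  star y ⬝ᵥ (H *ᵥ x)

namespace Stmt12Aux

lemma qform_eq {n : ℕ} (H : Matrix (Fin n) (Fin n) ℍ[ℝ]) (x y : Fin n → ℍ[ℝ]) :
    qform H x y = ∑ i, ∑ j, star (y i) * (H i j * x j) := by
  simp [qform, dotProduct, mulVec, Finset.mul_sum]

lemma qform_sub_left {n : ℕ} (H : Matrix (Fin n) (Fin n) ℍ[ℝ]) (x y z : Fin n → ℍ[ℝ]) :
    qform H (x - y) z = qform H x z - qform H y z := by
  simp [qform, Matrix.mulVec_sub, dotProduct_sub]

lemma qform_sub_right {n : ℕ} (H : Matrix (Fin n) (Fin n) ℍ[ℝ]) (x y z : Fin n → ℍ[ℝ]) :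
    qform H z (x - y) = qform H z x - qform H z y := by
  simp [qform, sub_dotProduct]

lemma qform_smul_left {n : ℕ} (H : Matrix (Fin n) (Fin n) ℍ[ℝ]) (c : ℍ[ℝ])
    (x z : Fin n → ℍ[ℝ]) :
    qform H (MulOpposite.op c • x) z = qform H x z * c := by
  simp only [qform_eq, Pi.smul_apply, MulOpposite.smul_eq_mul_unop, MulOpposite.unop_op,
    Finset.sum_mul, mul_assoc]

lemma qform_smul_right {n : ℕ} (H : Matrix (Fin n) (Fin n) ℍ[ℝ]) (c : ℍ[ℝ])
    (x z : Fin n → ℍ[ℝ]) :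
    qform H z (MulOpposite.op c • x) = star c * qform H z x := by
  simp only [qform_eq, Pi.smul_apply, MulOpposite.smul_eq_mul_unop, MulOpposite.unop_op,
    StarMul.star_mul, Finset.mul_sum, mul_assoc]

lemma qform_star {n : ℕ} {H : Matrix (Fin n) (Fin n) ℍ[ℝ]} (hH : H.IsHermitian)
    (x y : Fin n → ℍ[ℝ]) : star (qform H x y) = qform H y x := by
  simp only [qform_eq, star_sum]
  rw [Finset.sum_comm]
  refine Finset.sum_congr rfl fun j _ => Finset.sum_congr rfl fun i _ => ?_
  have h1 : star (H j i) = H i j := by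
    conv_rhs => rw [← hH]
    rfl
  rw [← h1]
  simp [StarMul.star_mul, star_star, mul_assoc]


lemma qform_surj {n m : ℕ} (H : Matrix (Fin n) (Fin n) ℍ[ℝ])
    (hHinv : ∃ K, H * K = 1 ∧ K * H = 1)
    (e : Fin m → (Fin n → ℍ[ℝ])) (hind : LinearIndependent ℍ[ℝ]ᵐᵒᵖ e)
    (w : Fin m → ℍ[ℝ]) : ∃ x : Fin n → ℍ[ℝ], ∀ i, qform H x (e i) = w i := by
  classical
  set R := ℍ[ℝ]ᵐᵒᵖ
  let T : (Fin n → ℍ[ℝ]) →ₗ[R] (Fin m → ℍ[ℝ]) :=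
    { toFun := fun x i => qform H x (e i)
      map_add' := fun x y => by
        funext i
        simp [qform, Matrix.mulVec_add, dotProduct_add]
      map_smul' := fun c x => by
        funext i
        have : c = MulOpposite.op c.unop := rfl
        rw [this]
        simp only [RingHom.id_apply, Pi.smul_apply, MulOpposite.smul_eq_mul_unop,
          MulOpposite.unop_op]
        exact qform_smul_left H c.unop x (e i) }
  suffices hs : LinearMap.range T = ⊤ by
    have hw : w ∈ LinearMap.range T := hs ▸ Submodule.mem_top
    obtain ⟨x, hx⟩ := hw
    exact ⟨x, fun i => congrFun hx i⟩
  by_contra hne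
  have hlt : LinearMap.range T < ⊤ := lt_of_le_of_ne le_top hne
  set p := LinearMap.range T
  haveI : Nontrivial ((Fin m → ℍ[ℝ]) ⧸ p) := Submodule.Quotient.nontrivial_iff.mpr hlt.ne
  obtain ⟨q, hq⟩ := exists_ne (0 : (Fin m → ℍ[ℝ]) ⧸ p)
  let b := Module.Basis.ofVectorSpace R ((Fin m → ℍ[ℝ]) ⧸ p)
  have hrepr : b.repr q ≠ 0 := fun h => hq (by simpa using b.repr.injective (by simp [h]))
  obtain ⟨i₀, hi₀⟩ : ∃ i₀, b.repr q i₀ ≠ 0 := by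
    by_contra hc
    push_neg at hc
    exact hrepr (Finsupp.ext hc)
  let φ : (Fin m → ℍ[ℝ]) →ₗ[R] R := (b.coord i₀).comp p.mkQ
  -- φ vanishes on the range of T
  have hφ0 : ∀ x, φ (T x) = 0 := by
    intro x
    have hmem : T x ∈ p := LinearMap.mem_range_self T x
    have h1 : p.mkQ (T x) = 0 := (Submodule.Quotient.mk_eq_zero p).2 hmem
    show b.coord i₀ (p.mkQ (T x)) = 0
    rw [h1, map_zero]
  -- expand φ through coordinates
  set c : Fin m → R := fun i => φ (Pi.single i 1) with hc
  have hsingle : ∀ (i : Fin m) (a : ℍ[ℝ]),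
      (Pi.single i a : Fin m → ℍ[ℝ]) = MulOpposite.op a • Pi.single i 1 := by
    intro i a
    funext j
    by_cases h : j = i
    · subst h; simp [MulOpposite.smul_eq_mul_unop]
    · simp [Pi.single_apply, h, MulOpposite.smul_eq_mul_unop]
  have hφ : ∀ v : Fin m → ℍ[ℝ], φ v = ∑ i, MulOpposite.op (v i) * c i := by
    intro v
    have hv : v = ∑ i, Pi.single i (v i) := by
      funext j; simp [Finset.sum_apply, Pi.single_apply]
    conv_lhs => rw [hv]
    rw [map_sum]
    refine Finset.sum_congr rfl fun i _ => ?_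
    rw [hsingle i (v i), LinearMap.map_smul]
    rfl
  set d : Fin m → ℍ[ℝ] := fun i => (c i).unop with hd
  -- key identity
  have key : ∀ u : Fin n → ℍ[ℝ], ∑ i, d i * (star (e i) ⬝ᵥ u) = 0 := by
    intro u
    obtain ⟨K, hK1, _⟩ := hHinv
    have h0 := hφ0 (K *ᵥ u)
    rw [hφ] at h0
    have hT : ∀ i, (T (K *ᵥ u)) i = star (e i) ⬝ᵥ u := by
      intro i
      show qform H (K *ᵥ u) (e i) = star (e i) ⬝ᵥ u
      rw [qform, Matrix.mulVec_mulVec, hK1, Matrix.one_mulVec]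
    have h1 : (0 : R).unop = MulOpposite.unop (∑ i, MulOpposite.op ((T (K *ᵥ u)) i) * c i) := by
      rw [h0]
    rw [MulOpposite.unop_zero] at h1
    rw [show MulOpposite.unop (∑ i, MulOpposite.op ((T (K *ᵥ u)) i) * c i)
        = ∑ i, (c i).unop * (T (K *ᵥ u)) i from by
      induction (Finset.univ : Finset (Fin m)) using Finset.induction with
      | empty => simp
      | insert _ _ hni ih =>
        simp only [Finset.sum_insert hni, MulOpposite.unop_add, ih]
        rfl] at h1
    simpa [hT] using h1.symm
  -- evaluate at standard basis vectors
  have hrow : ∀ j : Fin n, ∑ i, d i * star (e i j) = 0 := by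
    intro j
    have := key (Pi.single j 1)
    simpa [dotProduct, Pi.single_apply, Finset.mul_sum] using this
  -- transfer to a linear relation among the e i
  have hrel : ∑ i, MulOpposite.op (star (d i)) • e i = 0 := by
    funext j
    have := congrArg star (hrow j)
    simp only [star_sum, StarMul.star_mul, star_star, star_zero] at this
    simpa [Finset.sum_apply, MulOpposite.smul_eq_mul_unop] using this
  have hz := Fintype.linearIndependent_iff.mp hind (fun i => MulOpposite.op (star (d i))) hrel
  have hc0 : ∀ i, c i = 0 := by
    intro i
    have : star (d i) = 0 := MulOpposite.op_injective (hz i)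
    have hd0 : d i = 0 := by simpa using congrArg star this
    have : (c i).unop = 0 := hd0
    exact MulOpposite.unop_injective this
  -- contradiction: φ is nonzero at a preimage of q
  obtain ⟨v, hv⟩ := Submodule.mkQ_surjective p q
  have : φ v = b.repr q i₀ := by simp [φ, hv]
  rw [hφ] at this
  simp only [hc0, mul_zero, Finset.sum_const_zero] at this
  exact hi₀ this.symm

end Stmt12Aux

theorem stmt12 {n m m₀ : ℕ} (hm : m₀ ≤ m)
    (H : Matrix (Fin n) (Fin n) ℍ[ℝ])
    (hH : H.IsHermitian) (hHinv : ∃ K, H * K = 1 ∧ K * H = 1)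
    (e : Fin m → (Fin n → ℍ[ℝ]))
    (hind : LinearIndependent ℍ[ℝ]ᵐᵒᵖ e)
    (hoff : ∀ i j : Fin m, i ≠ j → qform H (e i) (e j) = 0)
    (hzero : ∀ i : Fin m, (i : ℕ) < m₀ → qform H (e i) (e i) = 0)
    (hpm : ∀ i : Fin m, m₀ ≤ (i : ℕ) →
      qform H (e i) (e i) = 1 ∨ qform H (e i) (e i) = -1) :
    ∃ et : Fin m₀ → (Fin n → ℍ[ℝ]),
      (∀ (j : Fin m₀) (i : Fin m),
        qform H (et j) (e i) = if (i : ℕ) = (j : ℕ) then 1 else 0) ∧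
      (∀ k : Fin m₀, qform H (et k) (et k) = 0) := by
  classical
  have hex : ∀ j : Fin m₀, ∃ fj : Fin n → ℍ[ℝ],
      ∀ i : Fin m, qform H fj (e i) = if (i : ℕ) = (j : ℕ) then 1 else 0 :=
    fun j => Stmt12Aux.qform_surj H hHinv e hind
      (fun i => if (i : ℕ) = (j : ℕ) then 1 else 0)
  choose f hf using hex
  refine ⟨fun j => f j -
      MulOpposite.op ((2⁻¹ : ℝ) • qform H (f j) (f j)) • e (Fin.castLE hm j), ?_, ?_⟩
  · intro j i
    rw [Stmt12Aux.qform_sub_left, Stmt12Aux.qform_smul_left, hf j i]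
    by_cases hij : (i : ℕ) = (j : ℕ)
    · have hieq : Fin.castLE hm j = i := Fin.ext (by simp [hij])
      rw [hieq]
      rw [hzero i (by rw [hij]; exact j.isLt)]
      simp [hij]
    · have hne : Fin.castLE hm j ≠ i := fun h => hij (by rw [← h]; simp)
      rw [hoff _ _ hne]
      simp [hij]
  · intro k
    set g := e (Fin.castLE hm k) with hg
    set a := qform H (f k) (f k) with ha
    set cq : ℍ[ℝ] := (2⁻¹ : ℝ) • a with hcq
    have hfg : qform H (f k) g = 1 := by
      have := hf k (Fin.castLE hm k)
      simpa using this
    have hgf : qform H g (f k) = 1 := by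
      rw [← Stmt12Aux.qform_star hH (f k) g, hfg, star_one]
    have hgg : qform H g g = 0 := hzero (Fin.castLE hm k) (by simpa using k.isLt)
    have hstar_a : star a = a := Stmt12Aux.qform_star hH (f k) (f k)
    have hstar_c : star cq = cq := by
      rw [hcq, Quaternion.star_smul, hstar_a]
    have h1 : qform H (f k - MulOpposite.op cq • g) (f k) = a - cq := by
      rw [Stmt12Aux.qform_sub_left, Stmt12Aux.qform_smul_left, hgf, one_mul, ← ha]
    have h2 : qform H (f k - MulOpposite.op cq • g) g = 1 := by
      rw [Stmt12Aux.qform_sub_left, Stmt12Aux.qform_smul_left, hfg, hgg, zero_mul, sub_zero]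
    rw [Stmt12Aux.qform_sub_right, Stmt12Aux.qform_smul_right, h1, h2, hstar_c, mul_one]
    rw [hcq]
    have : a - (2⁻¹ : ℝ) • a - (2⁻¹ : ℝ) • a = ((1 : ℝ) - 2⁻¹ - 2⁻¹) • a := by
      rw [sub_smul, sub_smul, one_smul]
    rw [this]
    norm_num
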